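/- Let n ≥ 2 and let Ω ⊆ ℝⁿ be a bounded open strictly convex set with B_{r₁}(ξ₁) ⊆ Ω ⊆ B_{r₂}(ξ₂) for some radii 0 < r₁ ≤ r₂ and points ξ₁, ξ₂ ∈ ℝⁿ. Let u ∈ C²(Ω) ∩ C⁰(Ω̄) be a strictly convex function with (det D²u)^{1/n} = f in Ω and u = 0 on ∂Ω, where sup_Ω |f − 1| < 1, and let w ∈ C²(Ω) ∩ C⁰(Ω̄) be convex with det D²w = 1 in Ω and w = 0 on ∂Ω. Then: (a) −r₂²/2 ≤ inf_Ω w ≤ −r₁²/2; (b) sup_Ω |u − w| ≤ (r₂²/2)·sup_Ω |f − 1|; (c) |inf_Ω u − inf_Ω w| ≤ sup_Ω |u − w|. -/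

import Mathlib

open scoped RealInnerProductSpace
noncomputable section

abbrev Euc (n : ℕ) := EuclideanSpace ℝ (Fin n)

/-- Hessian matrix of `u` at `x`. -/
def hessianMatrix {n : ℕ} (u : Euc n → ℝ) (x : Euc n) : Matrix (Fin n) (Fin n) ℝ :=
  Matrix.of fun i j =>
    iteratedFDeriv ℝ 2 u x ![EuclideanSpace.single i 1, EuclideanSpace.single j 1]

/-- Determinant of the Hessian of `u` at `x`. -/
def hessDet {n : ℕ} (u : Euc n → ℝ) (x : Euc n) : ℝ := (hessianMatrix u x).det

open Matrix

variable {d : ℕ}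

lemma line_hasDerivAt (x₀ e : Euc d) (t : ℝ) :
    HasDerivAt (fun s : ℝ => x₀ + s • e) e t := by
  simpa using ((hasDerivAt_id t).smul_const e).const_add x₀

lemma hasDerivAt_comp_line {g : Euc d → ℝ} (x₀ e : Euc d) (t : ℝ)
    (h : DifferentiableAt ℝ g (x₀ + t • e)) :
    HasDerivAt (fun s => g (x₀ + s • e)) (fderiv ℝ g (x₀ + t • e) e) t :=
  h.hasFDerivAt.comp_hasDerivAt t (line_hasDerivAt x₀ e t)

lemma hasDerivAt_deriv_line {g : Euc d → ℝ} {x₀ : Euc d}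
    (h2 : DifferentiableAt ℝ (fderiv ℝ g) x₀) (e : Euc d) :
    HasDerivAt (fun t : ℝ => fderiv ℝ g (x₀ + t • e) e)
      (fderiv ℝ (fderiv ℝ g) x₀ e e) 0 := by
  have h1 : HasDerivAt (fun t : ℝ => fderiv ℝ g (x₀ + t • e))
      (fderiv ℝ (fderiv ℝ g) x₀ e) 0 := by
    have h2' : HasFDerivAt (fderiv ℝ g) (fderiv ℝ (fderiv ℝ g) x₀) (x₀ + (0:ℝ) • e) := by
      simpa using h2.hasFDerivAt
    exact h2'.comp_hasDerivAt 0 (line_hasDerivAt x₀ e 0)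
  have := (ContinuousLinearMap.apply ℝ ℝ e).hasFDerivAt.comp_hasDerivAt 0 h1
  exact this

lemma snd_nonpos_of_localMax {g : Euc d → ℝ} {x₀ : Euc d}
    (hg : ContDiffAt ℝ 2 g x₀) (hmax : IsLocalMax g x₀) (e : Euc d) :
    fderiv ℝ (fderiv ℝ g) x₀ e e ≤ 0 := by
  by_contra hL
  push_neg at hL
  set L := fderiv ℝ (fderiv ℝ g) x₀ e e with hLdef
  -- differentiability near x₀
  obtain ⟨U, hU, hUg⟩ : ∃ u ∈ nhds x₀, ContDiffOn ℝ 2 g u :=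
    hg.contDiffOn (m := 2) le_rfl (by simp)
  rcases mem_nhds_iff.1 hU with ⟨V, hVU, hVopen, hxV⟩
  have hdiff : ∀ y ∈ V, DifferentiableAt ℝ g y := fun y hy =>
    (((hUg.mono hVU) y hy).contDiffAt (hVopen.mem_nhds hy)).differentiableAt two_ne_zero
  have h2 : DifferentiableAt ℝ (fderiv ℝ g) x₀ :=
    (hg.fderiv_right (m := 1) (by norm_num)).differentiableAt one_ne_zero
  set q : ℝ → ℝ := fun t => fderiv ℝ g (x₀ + t • e) e with hqdef
  have hq : HasDerivAt q L 0 := hasDerivAt_deriv_line h2 e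
  have hq0 : q 0 = 0 := by
    simp [hqdef, hmax.fderiv_eq_zero]
  -- q is positive slightly to the right of 0
  have hslope : Filter.Tendsto (slope q 0) (nhdsWithin 0 {(0:ℝ)}ᶜ) (nhds L) :=
    hasDerivAt_iff_tendsto_slope.1 hq
  have hslope' : Filter.Tendsto (slope q 0) (nhdsWithin 0 (Set.Ioi 0)) (nhds L) :=
    hslope.mono_left (nhdsWithin_mono 0 (fun t ht => ne_of_gt ht))
  have hev : ∀ᶠ t in nhdsWithin 0 (Set.Ioi 0), 0 < slope q 0 t :=
    hslope'.eventually (eventually_gt_nhds hL)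
  rw [eventually_nhdsWithin_iff, Metric.eventually_nhds_iff] at hev
  obtain ⟨ε₂, hε₂, hev⟩ := hev
  -- points stay in V and below g x₀ near 0
  have hcont : Continuous (fun t : ℝ => x₀ + t • e) := by fun_prop
  have hmem : ∀ᶠ t in nhds (0:ℝ), (x₀ + t • e) ∈ V ∧ g (x₀ + t • e) ≤ g x₀ := by
    have h1 : ∀ᶠ t in nhds (0:ℝ), (x₀ + t • e) ∈ V := by
      exact (hcont.continuousAt (x := (0:ℝ))).preimage_mem_nhds
        (by simpa using hVopen.mem_nhds hxV)
    have h2' : ∀ᶠ t in nhds (0:ℝ), g (x₀ + t • e) ≤ g x₀ := by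
      exact (hcont.continuousAt (x := (0:ℝ))).preimage_mem_nhds (by simpa using (show {x | g x ≤ g x₀} ∈ nhds x₀ from hmax))
    exact h1.and h2'
  rw [Metric.eventually_nhds_iff] at hmem
  obtain ⟨ε₁, hε₁, hmem⟩ := hmem
  set b := min ε₁ ε₂ / 2 with hbdef
  have hb : 0 < b := by positivity
  have hbε₁ : b < ε₁ := by
    have : min ε₁ ε₂ ≤ ε₁ := min_le_left _ _
    simp only [hbdef]; linarith
  have hbε₂ : b < ε₂ := by
    have : min ε₁ ε₂ ≤ ε₂ := min_le_right _ _
    simp only [hbdef]; linarith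
  have hIccmem : ∀ t ∈ Set.Icc (0:ℝ) b, (x₀ + t • e) ∈ V ∧ g (x₀ + t • e) ≤ g x₀ := by
    intro t ht
    apply hmem
    rw [Real.dist_eq]
    rw [abs_of_nonneg (by linarith [ht.1])]
    simp only [sub_zero]
    linarith [ht.2]
  set ψ : ℝ → ℝ := fun t => g (x₀ + t • e) with hψdef
  have hψderiv : ∀ t ∈ Set.Icc (0:ℝ) b, HasDerivAt ψ (q t) t := fun t ht =>
    hasDerivAt_comp_line x₀ e t (hdiff _ (hIccmem t ht).1)
  have hmono : StrictMonoOn ψ (Set.Icc (0:ℝ) b) := by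
    apply strictMonoOn_of_deriv_pos (convex_Icc 0 b)
    · intro t ht
      exact (hψderiv t ht).continuousAt.continuousWithinAt
    · intro t ht
      rw [interior_Icc] at ht
      rw [(hψderiv t ⟨ht.1.le, ht.2.le⟩).deriv]
      have hqt : 0 < slope q 0 t := by
        apply hev
        · rw [Real.dist_eq, sub_zero, abs_of_nonneg ht.1.le]; exact lt_trans ht.2 hbε₂
        · exact ht.1
      rw [slope_def_field, hq0, sub_zero, sub_zero] at hqt
      have h' := mul_pos hqt ht.1
      rwa [div_mul_cancel₀ _ (ne_of_gt ht.1)] at h'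
  have hlt : ψ 0 < ψ b := hmono (Set.left_mem_Icc.2 hb.le) (Set.right_mem_Icc.2 hb.le) hb
  have : ψ b ≤ g x₀ := (hIccmem b (Set.right_mem_Icc.2 hb.le)).2
  have hψ0 : ψ 0 = g x₀ := by simp [hψdef]
  linarith

lemma snd_nonneg_of_convexOn {Ω : Set (Euc d)} (hΩopen : IsOpen Ω) {g : Euc d → ℝ}
    (hconv : ConvexOn ℝ Ω g) (hg : ContDiffOn ℝ 2 g Ω) {x₀ : Euc d} (hx₀ : x₀ ∈ Ω)
    (e : Euc d) : 0 ≤ fderiv ℝ (fderiv ℝ g) x₀ e e := by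
  obtain ⟨ρ, hρ, hballΩ⟩ := Metric.isOpen_iff.1 hΩopen x₀ hx₀
  set ε : ℝ := ρ / (‖e‖ + 1) with hεdef
  have hεpos : 0 < ε := by positivity
  have hline : ∀ t : ℝ, |t| < ε → (x₀ + t • e) ∈ Ω := by
    intro t ht
    apply hballΩ
    rw [Metric.mem_ball, dist_eq_norm]
    have h1 : ‖x₀ + t • e - x₀‖ = |t| * ‖e‖ := by
      simp [norm_smul]
    rw [h1]
    calc |t| * ‖e‖ ≤ |t| * (‖e‖ + 1) := by
          apply mul_le_mul_of_nonneg_left (by linarith) (abs_nonneg t)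
      _ < ε * (‖e‖ + 1) := by
          apply mul_lt_mul_of_pos_right ht (by positivity)
      _ = ρ := by
          rw [hεdef, div_mul_cancel₀]
          positivity
  have hImem : ∀ t ∈ Set.Ioo (-ε) ε, (x₀ + t • e) ∈ Ω := by
    intro t ht
    exact hline t (abs_lt.2 ⟨ht.1, ht.2⟩)
  have hdiff : ∀ y ∈ Ω, DifferentiableAt ℝ g y := fun y hy =>
    ((hg y hy).contDiffAt (hΩopen.mem_nhds hy)).differentiableAt two_ne_zero
  set ψ : ℝ → ℝ := fun t => g (x₀ + t • e) with hψdef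
  set q : ℝ → ℝ := fun t => fderiv ℝ g (x₀ + t • e) e with hqdef
  have hψderiv : ∀ t ∈ Set.Ioo (-ε) ε, HasDerivAt ψ (q t) t := fun t ht =>
    hasDerivAt_comp_line x₀ e t (hdiff _ (hImem t ht))
  -- ψ is convex on the interval
  have hψconv : ConvexOn ℝ (Set.Ioo (-ε) ε) ψ := by
    have hA : ConvexOn ℝ ((AffineMap.lineMap x₀ (x₀ + e) : ℝ →ᵃ[ℝ] Euc d) ⁻¹' Ω)
        (g ∘ (AffineMap.lineMap x₀ (x₀ + e) : ℝ →ᵃ[ℝ] Euc d)) :=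
      hconv.comp_affineMap _
    have heq : ∀ t : ℝ, (AffineMap.lineMap x₀ (x₀ + e) : ℝ →ᵃ[ℝ] Euc d) t = x₀ + t • e := by
      intro t
      simp only [AffineMap.lineMap_apply, vsub_eq_sub, add_sub_cancel_left, vadd_eq_add]
      abel
    have hψeq : ψ = g ∘ (AffineMap.lineMap x₀ (x₀ + e) : ℝ →ᵃ[ℝ] Euc d) := by
      funext t
      simp [hψdef, heq t]
    rw [hψeq]
    apply hA.subset _ (convex_Ioo _ _)
    intro t ht
    simp only [Set.mem_preimage, heq]
    exact hImem t ht
  -- deriv of ψ is monotone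
  have hmono : MonotoneOn (deriv ψ) (Set.Ioo (-ε) ε) :=
    hψconv.monotoneOn_deriv (fun t ht => (hψderiv t ht).differentiableAt)
  have h2 : DifferentiableAt ℝ (fderiv ℝ g) x₀ :=
    (((hg x₀ hx₀).contDiffAt (hΩopen.mem_nhds hx₀)).fderiv_right (m := 1)
      (by norm_num)).differentiableAt one_ne_zero
  have hq : HasDerivAt q (fderiv ℝ (fderiv ℝ g) x₀ e e) 0 := hasDerivAt_deriv_line h2 e
  have hslope : Filter.Tendsto (slope q 0) (nhdsWithin 0 (Set.Ioi 0))
      (nhds (fderiv ℝ (fderiv ℝ g) x₀ e e)) :=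
    (hasDerivAt_iff_tendsto_slope.1 hq).mono_left
      (nhdsWithin_mono 0 (fun t ht => ne_of_gt ht))
  apply ge_of_tendsto hslope
  rw [eventually_nhdsWithin_iff, Metric.eventually_nhds_iff]
  refine ⟨ε, hεpos, fun t ht ht' => ?_⟩
  rw [Real.dist_eq, sub_zero] at ht
  have ht0 : (0:ℝ) < t := ht'
  have htI : t ∈ Set.Ioo (-ε) ε := ⟨by cases abs_lt.1 ht; linarith, by cases abs_lt.1 ht; linarith⟩
  have h0I : (0:ℝ) ∈ Set.Ioo (-ε) ε := ⟨by linarith, hεpos⟩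
  have hq_eq : ∀ s ∈ Set.Ioo (-ε) ε, deriv ψ s = q s := fun s hs => (hψderiv s hs).deriv
  have : q 0 ≤ q t := by
    rw [← hq_eq 0 h0I, ← hq_eq t htI]
    exact hmono h0I htI ht0.le
  rw [slope_def_field, sub_zero]
  apply div_nonneg (by linarith) ht0.le

lemma hessianMatrix_apply (g : Euc d → ℝ) (x : Euc d) (i j : Fin d) :
    hessianMatrix g x i j
      = fderiv ℝ (fderiv ℝ g) x (EuclideanSpace.single i 1) (EuclideanSpace.single j 1) := by
  rw [hessianMatrix, Matrix.of_apply, iteratedFDeriv_two_apply]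
  simp

lemma euc_sum_single (e : Euc d) :
    (∑ i, e i • EuclideanSpace.single i (1:ℝ)) = e := by
  ext j
  have : (∑ i, e i • EuclideanSpace.single i (1:ℝ)) j = ∑ i, (e i • EuclideanSpace.single i (1:ℝ)) j :=
    by rw [WithLp.ofLp_sum, Finset.sum_apply]
  rw [this]
  simp [EuclideanSpace.single_apply]

lemma quadform_eq (g : Euc d → ℝ) (x : Euc d) (y : Fin d → ℝ) :
    y ⬝ᵥ (hessianMatrix g x) *ᵥ y
      = fderiv ℝ (fderiv ℝ g) x (∑ i, y i • EuclideanSpace.single i (1:ℝ))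
          (∑ i, y i • EuclideanSpace.single i (1:ℝ)) := by
  simp only [dotProduct, Matrix.mulVec, hessianMatrix_apply, map_sum, _root_.map_smul,
    ContinuousLinearMap.coe_sum', Finset.sum_apply, ContinuousLinearMap.coe_smul',
    Pi.smul_apply, smul_eq_mul, Finset.mul_sum]
  rw [Finset.sum_comm]
  apply Finset.sum_congr rfl
  intro i _
  apply Finset.sum_congr rfl
  intro j _
  ring

lemma psd_det_nonneg {N : Type*} [Fintype N] [DecidableEq N] {A : Matrix N N ℝ}
    (hA : A.PosSemidef) : 0 ≤ A.det := by
  rw [hA.1.det_eq_prod_eigenvalues]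
  apply Finset.prod_nonneg
  intro i _
  exact_mod_cast hA.eigenvalues_nonneg i

open scoped MatrixOrder

lemma det_le_det_of_quadform_le {N : Type*} [Fintype N] [DecidableEq N]
    {A B : Matrix N N ℝ} (hA : A.PosSemidef) (hBh : B.IsHermitian)
    (hle : ∀ x : N → ℝ, x ⬝ᵥ A *ᵥ x ≤ x ⬝ᵥ B *ᵥ x) : A.det ≤ B.det := by
  have hstar : ∀ x : N → ℝ, star x = x := fun x => rfl
  have hB : B.PosSemidef := by
    rw [Matrix.posSemidef_iff_dotProduct_mulVec]
    refine ⟨hBh, fun x => ?_⟩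
    rw [hstar]
    exact le_trans (by simpa [hstar] using hA.dotProduct_mulVec_nonneg x) (hle x)
  by_cases hBpd : B.PosDef
  · -- B positive definite case
    set C := CFC.sqrt B with hCdef
    have hC : C.PosSemidef := Matrix.nonneg_iff_posSemidef.1 (CFC.sqrt_nonneg B)
    have hCsq : C * C = B := CFC.sqrt_mul_sqrt_self B (Matrix.nonneg_iff_posSemidef.2 hB)
    have hdetB : 0 < B.det := hBpd.det_pos
    have hdetC : C.det ≠ 0 := by
      intro h
      rw [← hCsq, Matrix.det_mul, h, mul_zero] at hdetB
      exact lt_irrefl _ hdetB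
    have hCunit : IsUnit C.det := isUnit_iff_ne_zero.2 hdetC
    have hCsymm : Cᵀ = C := hC.1
    have hCinvsymm : (C⁻¹)ᵀ = C⁻¹ := by
      rw [Matrix.transpose_nonsing_inv, hCsymm]
    have key : ∀ z : N → ℝ, (C *ᵥ (C⁻¹ *ᵥ z)) = z := fun z => by
      rw [Matrix.mulVec_mulVec, Matrix.mul_nonsing_inv C hCunit, Matrix.one_mulVec]
    set M := C⁻¹ * A * C⁻¹ with hMdef
    have hMpsd : M.PosSemidef := by
      have := hA.mul_mul_conjTranspose_same C⁻¹
      rwa [Matrix.conjTranspose_eq_transpose_of_trivial, hCinvsymm] at this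
    -- quadratic form of M bounded by identity
    have hMform : ∀ y : N → ℝ, y ⬝ᵥ M *ᵥ y ≤ y ⬝ᵥ y := by
      intro y
      have h1 : M *ᵥ y = C⁻¹ *ᵥ (A *ᵥ (C⁻¹ *ᵥ y)) := by
        rw [hMdef, ← Matrix.mulVec_mulVec, ← Matrix.mulVec_mulVec]
      have hdot : ∀ z : N → ℝ, y ⬝ᵥ (C⁻¹ *ᵥ z) = (C⁻¹ *ᵥ y) ⬝ᵥ z := by
        intro z
        rw [dotProduct_mulVec, ← Matrix.mulVec_transpose, hCinvsymm]
      rw [h1, hdot]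
      calc (C⁻¹ *ᵥ y) ⬝ᵥ A *ᵥ (C⁻¹ *ᵥ y) ≤ (C⁻¹ *ᵥ y) ⬝ᵥ B *ᵥ (C⁻¹ *ᵥ y) := hle _
        _ = (C *ᵥ (C⁻¹ *ᵥ y)) ⬝ᵥ (C *ᵥ (C⁻¹ *ᵥ y)) := by
            rw [← hCsq, ← Matrix.mulVec_mulVec, dotProduct_mulVec,
              ← Matrix.mulVec_transpose, hCsymm]
        _ = y ⬝ᵥ y := by rw [key y]
    -- eigenvalues of M are in [0, 1]
    have hMdet : M.det ≤ 1 := by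
      rw [hMpsd.1.det_eq_prod_eigenvalues]
      have hprod : ∏ i, hMpsd.1.eigenvalues i ≤ 1 := by
        apply Finset.prod_le_one
        · intro i _
          exact hMpsd.eigenvalues_nonneg i
        · intro i _
          have hv := hMpsd.1.mulVec_eigenvectorBasis i
          set v : N → ℝ := ⇑(hMpsd.1.eigenvectorBasis i) with hvdef
          have hvnorm : v ⬝ᵥ v = 1 := by
            have h1 : (inner ℝ (hMpsd.1.eigenvectorBasis i) (hMpsd.1.eigenvectorBasis i) : ℝ)
                = 1 := by
              rw [real_inner_self_eq_norm_sq, hMpsd.1.eigenvectorBasis.orthonormal.1 i]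
              norm_num
            rw [EuclideanSpace.inner_eq_star_dotProduct] at h1
            simpa [hstar] using h1
          have h2 : v ⬝ᵥ M *ᵥ v = hMpsd.1.eigenvalues i := by
            rw [hv, dotProduct_smul, hvnorm]
            simp
          have h3 := hMform v
          rw [h2, hvnorm] at h3
          exact h3
      exact_mod_cast hprod
    -- conclude
    have hAeq : A = C * M * C := by
      rw [hMdef]
      rw [Matrix.mul_assoc, Matrix.mul_assoc, Matrix.nonsing_inv_mul C hCunit, Matrix.mul_one,
        ← Matrix.mul_assoc, Matrix.mul_nonsing_inv C hCunit, Matrix.one_mul]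
    calc A.det = C.det * M.det * C.det := by rw [hAeq, Matrix.det_mul, Matrix.det_mul]
      _ = (C.det * C.det) * M.det := by ring
      _ = B.det * M.det := by rw [← Matrix.det_mul, hCsq]
      _ ≤ B.det * 1 := by
          apply mul_le_mul_of_nonneg_left hMdet (le_of_lt hdetB)
      _ = B.det := mul_one _
  · -- B not positive definite: det A = 0 ≤ det B
    have hx : ∃ x : N → ℝ, x ≠ 0 ∧ x ⬝ᵥ B *ᵥ x ≤ 0 := by
      by_contra h
      push_neg at h
      exact hBpd (Matrix.posDef_iff_dotProduct_mulVec.2 ⟨hBh, fun x hx0 => by simpa [hstar] using h x hx0⟩)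
    obtain ⟨x, hx0, hxB⟩ := hx
    have hxA0 : x ⬝ᵥ A *ᵥ x = 0 :=
      le_antisymm (le_trans (hle x) hxB) (by simpa [hstar] using hA.dotProduct_mulVec_nonneg x)
    have hAx : A *ᵥ x = 0 := by
      have := (hA.dotProduct_mulVec_zero_iff x).1
      apply this
      simpa [hstar] using hxA0
    have hdetA : A.det = 0 := Matrix.exists_mulVec_eq_zero_iff.1 ⟨x, hx0, hAx⟩
    rw [hdetA]
    exact psd_det_nonneg hB

lemma hessian_isHermitian {g : Euc d → ℝ} {x : Euc d} (hg : ContDiffAt ℝ 2 g x) :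
    (hessianMatrix g x).IsHermitian := by
  have hsym := hg.isSymmSndFDerivAt (by simp)
  refine Matrix.IsHermitian.ext fun i j => ?_
  simp only [hessianMatrix_apply, RCLike.star_def]
  rw [starRingEnd_apply]
  simp only [star_trivial]
  exact hsym _ _

lemma snd_fderiv_sub {u v : Euc d → ℝ} {z : Euc d} (hu : ContDiffAt ℝ 2 u z)
    (hv : ContDiffAt ℝ 2 v z) :
    fderiv ℝ (fderiv ℝ (fun y => u y - v y)) z
      = fderiv ℝ (fderiv ℝ u) z - fderiv ℝ (fderiv ℝ v) z := by
  have hev : ∀ᶠ y in nhds z, fderiv ℝ (fun y => u y - v y) y = fderiv ℝ u y - fderiv ℝ v y := by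
    filter_upwards [hu.eventually (by simp), hv.eventually (by simp)] with y hy1 hy2
    exact fderiv_sub (hy1.differentiableAt two_ne_zero) (hy2.differentiableAt two_ne_zero)
  rw [Filter.EventuallyEq.fderiv_eq hev]
  exact fderiv_sub ((hu.fderiv_right (m := 1) (by norm_num)).differentiableAt one_ne_zero)
    ((hv.fderiv_right (m := 1) (by norm_num)).differentiableAt one_ne_zero)

lemma comparison_principle {Ω : Set (Euc d)} (hΩopen : IsOpen Ω)
    (hΩbdd : Bornology.IsBounded Ω) {u v : Euc d → ℝ}
    (hu2 : ContDiffOn ℝ 2 u Ω) (huc : ContinuousOn u (closure Ω))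
    (hv2 : ContDiffOn ℝ 2 v Ω) (hvc : ContinuousOn v (closure Ω))
    (hupsd : ∀ x ∈ Ω, ∀ y : Fin d → ℝ, 0 ≤ y ⬝ᵥ (hessianMatrix u x) *ᵥ y)
    (hdet : ∀ x ∈ Ω, hessDet v x < hessDet u x)
    (hbdry : ∀ x ∈ frontier Ω, u x ≤ v x) :
    ∀ x ∈ Ω, u x ≤ v x := by
  by_contra hcon
  push_neg at hcon
  obtain ⟨x₀, hx₀Ω, hx₀⟩ := hcon
  set g : Euc d → ℝ := fun y => u y - v y with hgdef
  have hgcont : ContinuousOn g (closure Ω) := huc.sub hvc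
  have hcompact : IsCompact (closure Ω) :=
    Metric.isCompact_of_isClosed_isBounded isClosed_closure hΩbdd.closure
  have hclne : (closure Ω).Nonempty := ⟨x₀, subset_closure hx₀Ω⟩
  obtain ⟨z, hzcl, hzmax⟩ := hcompact.exists_isMaxOn hclne hgcont
  have hgz : 0 < g z := lt_of_lt_of_le (by simp [hgdef]; linarith) (hzmax (subset_closure hx₀Ω))
  have hzΩ : z ∈ Ω := by
    by_contra hzn
    have : z ∈ frontier Ω := by
      rw [hΩopen.frontier_eq]
      exact ⟨hzcl, hzn⟩
    have := hbdry z this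
    simp only [hgdef] at hgz
    linarith
  have hgmax : IsLocalMax g z := by
    filter_upwards [hΩopen.mem_nhds hzΩ] with y hy
    exact hzmax (subset_closure hy)
  have huat : ContDiffAt ℝ 2 u z := (hu2 z hzΩ).contDiffAt (hΩopen.mem_nhds hzΩ)
  have hvat : ContDiffAt ℝ 2 v z := (hv2 z hzΩ).contDiffAt (hΩopen.mem_nhds hzΩ)
  have hgat : ContDiffAt ℝ 2 g z := huat.sub hvat
  -- quadratic form comparison at z
  have hform : ∀ y : Fin d → ℝ,
      y ⬝ᵥ (hessianMatrix u z) *ᵥ y ≤ y ⬝ᵥ (hessianMatrix v z) *ᵥ y := by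
    intro y
    rw [quadform_eq, quadform_eq]
    set e := ∑ i, y i • EuclideanSpace.single i (1:ℝ) with hedef
    have h1 : fderiv ℝ (fderiv ℝ g) z e e ≤ 0 := snd_nonpos_of_localMax hgat hgmax e
    rw [hgdef, snd_fderiv_sub huat hvat] at h1
    simp only [ContinuousLinearMap.sub_apply, ContinuousLinearMap.coe_sub', Pi.sub_apply] at h1
    linarith
  have hAp : (hessianMatrix u z).PosSemidef := by
    refine Matrix.posSemidef_iff_dotProduct_mulVec.2 ⟨hessian_isHermitian huat, fun y => ?_⟩
    simpa using hupsd z hzΩ y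
  have := det_le_det_of_quadform_le hAp (hessian_isHermitian hvat) hform
  exact absurd this (not_le.2 (hdet z hzΩ))

/-- The paraboloid `x ↦ (‖x-ξ‖² - r²)/2`. -/
def parab (ξ : Euc d) (r : ℝ) : Euc d → ℝ := fun x => ((inner ℝ (x - ξ) (x - ξ) : ℝ) - r ^ 2) / 2

lemma parab_eq_norm (ξ : Euc d) (r : ℝ) (x : Euc d) :
    parab ξ r x = (‖x - ξ‖ ^ 2 - r ^ 2) / 2 := by
  rw [parab, real_inner_self_eq_norm_sq]

lemma parab_contDiff (ξ : Euc d) (r : ℝ) : ContDiff ℝ 2 (parab ξ r) := by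
  apply ContDiff.div_const
  apply ContDiff.sub _ contDiff_const
  exact ContDiff.inner ℝ (contDiff_id.sub contDiff_const) (contDiff_id.sub contDiff_const)

lemma parab_hasFDerivAt (ξ : Euc d) (r : ℝ) (y : Euc d) :
    HasFDerivAt (parab ξ r) ((innerSL ℝ) (y - ξ)) y := by
  have h1 : HasFDerivAt (fun x : Euc d => (inner ℝ (x - ξ) (x - ξ) : ℝ))
      ((fderivInnerCLM ℝ (y - ξ, y - ξ)).comp
        ((ContinuousLinearMap.id ℝ (Euc d)).prod (ContinuousLinearMap.id ℝ (Euc d)))) y := by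
    have hid : HasFDerivAt (fun x : Euc d => x - ξ) (ContinuousLinearMap.id ℝ (Euc d)) y :=
      (hasFDerivAt_id y).sub_const ξ
    exact hid.inner ℝ hid
  have h2 := (h1.sub_const (r ^ 2)).const_smul ((2:ℝ)⁻¹)
  have heq : parab ξ r
      = fun x : Euc d => (2:ℝ)⁻¹ • ((inner ℝ (x - ξ) (x - ξ) : ℝ) - r ^ 2) := by
    funext x
    simp only [parab, smul_eq_mul]
    ring
  rw [heq]
  refine h2.congr_fderiv ?_
  symm
  apply ContinuousLinearMap.ext
  intro w
  simp only [ContinuousLinearMap.coe_comp', Function.comp_apply, fderivInnerCLM_apply,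
    ContinuousLinearMap.prod_apply, ContinuousLinearMap.coe_id', id_eq,
    ContinuousLinearMap.coe_smul', Pi.smul_apply, innerSL_apply_apply, smul_eq_mul]
  rw [real_inner_comm (y - ξ) w]
  ring

lemma parab_snd_fderiv (ξ : Euc d) (r : ℝ) (x : Euc d) :
    fderiv ℝ (fderiv ℝ (parab ξ r)) x = (innerSL ℝ : Euc d →L[ℝ] Euc d →L[ℝ] ℝ) := by
  have h1 : fderiv ℝ (parab ξ r) = fun y => (innerSL ℝ) (y - ξ) := by
    funext y
    exact (parab_hasFDerivAt ξ r y).fderiv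
  rw [h1]
  have h2 : HasFDerivAt (fun y : Euc d => (innerSL ℝ (E := Euc d)) (y - ξ))
      (innerSL ℝ : Euc d →L[ℝ] Euc d →L[ℝ] ℝ) x := by
    have hid : HasFDerivAt (fun y : Euc d => y - ξ) (ContinuousLinearMap.id ℝ (Euc d)) x :=
      (hasFDerivAt_id x).sub_const ξ
    have h3 := (innerSL ℝ (E := Euc d)).hasFDerivAt.comp x hid
    rw [ContinuousLinearMap.comp_id] at h3
    exact h3
  exact h2.fderiv

lemma parab_hessianMatrix (ξ : Euc d) (r : ℝ) (x : Euc d) :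
    hessianMatrix (parab ξ r) x = (1 : Matrix (Fin d) (Fin d) ℝ) := by
  ext i j
  rw [hessianMatrix_apply, parab_snd_fderiv]
  rw [innerSL_apply_apply, EuclideanSpace.inner_single_left]
  simp [EuclideanSpace.single_apply, Matrix.one_apply, eq_comm]

lemma parab_hessDet (ξ : Euc d) (r : ℝ) (x : Euc d) : hessDet (parab ξ r) x = 1 := by
  rw [hessDet, parab_hessianMatrix, Matrix.det_one]

-- scaling of the Hessian
lemma snd_fderiv_const_mul {g : Euc d → ℝ} {z : Euc d} (hg : ContDiffAt ℝ 2 g z) (c : ℝ) :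
    fderiv ℝ (fderiv ℝ (fun y => c * g y)) z = c • fderiv ℝ (fderiv ℝ g) z := by
  have hev : ∀ᶠ y in nhds z, fderiv ℝ (fun y => c * g y) y = c • fderiv ℝ g y := by
    filter_upwards [hg.eventually (by simp)] with y hy
    exact fderiv_const_mul (hy.differentiableAt two_ne_zero) c
  rw [Filter.EventuallyEq.fderiv_eq hev]
  exact fderiv_const_smul ((hg.fderiv_right (m := 1) (by norm_num)).differentiableAt one_ne_zero) c

lemma hessianMatrix_const_mul {g : Euc d → ℝ} {z : Euc d} (hg : ContDiffAt ℝ 2 g z) (c : ℝ) :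
    hessianMatrix (fun y => c * g y) z = c • hessianMatrix g z := by
  ext i j
  rw [Matrix.smul_apply, hessianMatrix_apply, hessianMatrix_apply, snd_fderiv_const_mul hg c]
  simp

lemma hessDet_const_mul {g : Euc d → ℝ} {z : Euc d} (hg : ContDiffAt ℝ 2 g z) (c : ℝ) :
    hessDet (fun y => c * g y) z = c ^ d * hessDet g z := by
  rw [hessDet, hessDet, hessianMatrix_const_mul hg c, Matrix.det_smul]
  simp

lemma quadform_const_mul_nonneg {g : Euc d → ℝ} {z : Euc d} (hg : ContDiffAt ℝ 2 g z)
    {c : ℝ} (hc : 0 ≤ c) (hpsd : ∀ y : Fin d → ℝ, 0 ≤ y ⬝ᵥ hessianMatrix g z *ᵥ y) :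
    ∀ y : Fin d → ℝ, 0 ≤ y ⬝ᵥ hessianMatrix (fun x => c * g x) z *ᵥ y := by
  intro y
  rw [hessianMatrix_const_mul hg c, Matrix.smul_mulVec, dotProduct_smul,
    smul_eq_mul]
  exact mul_nonneg hc (hpsd y)

lemma dotProduct_self_nonneg' (y : Fin d → ℝ) : 0 ≤ y ⬝ᵥ y :=
  Finset.sum_nonneg fun i _ => mul_self_nonneg (y i)

lemma le_of_forall_eps {a b c : ℝ} (hc : 0 ≤ c)
    (h : ∀ ε : ℝ, 0 < ε → ε < 1 → a ≤ b + ε * c) : a ≤ b := by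
  by_contra hab
  push_neg at hab
  set ε := min (1/2 : ℝ) ((a - b) / (2 * (c + 1))) with hεdef
  have hc1 : (0:ℝ) < c + 1 := by linarith
  have hε0 : 0 < ε := lt_min (by norm_num) (div_pos (by linarith) (by linarith))
  have hε1 : ε < 1 := lt_of_le_of_lt (min_le_left _ _) (by norm_num)
  have h2 := h ε hε0 hε1
  have h3 : ε ≤ (a - b) / (2 * (c + 1)) := min_le_right _ _
  have h4 : ε * c ≤ (a - b) / (2 * (c + 1)) * c := mul_le_mul_of_nonneg_right h3 hc
  have h5 : (a - b) / (2 * (c + 1)) * c < a - b := by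
    rw [div_mul_eq_mul_div, div_lt_iff₀ (by linarith)]
    nlinarith
  linarith

/-- Comparison with the unit-right-hand-side solution: if `B_{r₁}(ξ₁) ⊆ Ω ⊆ B_{r₂}(ξ₂)`,
`u` is strictly convex with `(det D²u)^{1/n} = f`, `u = 0` on `∂Ω`, `sup_Ω |f − 1| ≤ δ < 1`,
and `w` is convex with `det D²w = 1`, `w = 0` on `∂Ω`, then
(a) `−r₂²/2 ≤ inf_Ω w ≤ −r₁²/2`;
(b) `sup_Ω |u − w| ≤ (r₂²/2)·δ`;
(c) `|inf_Ω u − inf_Ω w| ≤ sup_Ω |u − w|`. -/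
theorem comparison_estimates (n : ℕ) (hn : 2 ≤ n)
    (Ω : Set (Euc n)) (hΩopen : IsOpen Ω) (hΩbdd : Bornology.IsBounded Ω)
    (hΩconv : StrictConvex ℝ Ω)
    (r₁ r₂ : ℝ) (ξ₁ ξ₂ : Euc n) (hr₁ : 0 < r₁) (hr₁₂ : r₁ ≤ r₂)
    (hball₁ : Metric.ball ξ₁ r₁ ⊆ Ω) (hball₂ : Ω ⊆ Metric.ball ξ₂ r₂)
    (u f : Euc n → ℝ)
    (hu2 : ContDiffOn ℝ 2 u Ω) (huc : ContinuousOn u (closure Ω))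
    (huconv : StrictConvexOn ℝ Ω u)
    (huf : ∀ x ∈ Ω, hessDet u x = f x ^ n)
    (hubdry : ∀ x ∈ frontier Ω, u x = 0)
    (δ : ℝ) (hδ : ∀ x ∈ Ω, |f x - 1| ≤ δ) (hδ1 : δ < 1)
    (w : Euc n → ℝ)
    (hw2 : ContDiffOn ℝ 2 w Ω) (hwc : ContinuousOn w (closure Ω)) (hwconv : ConvexOn ℝ Ω w)
    (hwdet : ∀ x ∈ Ω, hessDet w x = 1)
    (hwbdry : ∀ x ∈ frontier Ω, w x = 0) :
    (-(r₂ ^ 2) / 2 ≤ sInf (w '' Ω) ∧ sInf (w '' Ω) ≤ -(r₁ ^ 2) / 2) ∧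
    (∀ x ∈ Ω, |u x - w x| ≤ r₂ ^ 2 / 2 * δ) ∧
    |sInf (u '' Ω) - sInf (w '' Ω)| ≤ sSup ((fun x => |u x - w x|) '' Ω) := by
  have hnne : n ≠ 0 := by omega
  have hξ₁ : ξ₁ ∈ Ω := hball₁ (Metric.mem_ball_self hr₁)
  have hne : Ω.Nonempty := ⟨ξ₁, hξ₁⟩
  have hr₂ : 0 < r₂ := lt_of_lt_of_le hr₁ hr₁₂
  have hδ0 : 0 ≤ δ := le_trans (abs_nonneg _) (hδ ξ₁ hξ₁)
  have hcl₂ : closure Ω ⊆ Metric.closedBall ξ₂ r₂ :=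
    le_trans (closure_mono hball₂) Metric.closure_ball_subset_closedBall
  have hfr : ∀ x ∈ frontier Ω, x ∉ Ω ∧ x ∈ closure Ω := by
    intro x hx
    rw [hΩopen.frontier_eq] at hx
    exact ⟨hx.2, hx.1⟩
  -- paraboloid bounds
  have pfr₁ : ∀ x ∈ frontier Ω, 0 ≤ parab ξ₁ r₁ x := by
    intro x hx
    have hxnb : x ∉ Metric.ball ξ₁ r₁ := fun h => (hfr x hx).1 (hball₁ h)
    rw [Metric.mem_ball, not_lt] at hxnb
    rw [parab_eq_norm]
    have : r₁ ≤ ‖x - ξ₁‖ := by rwa [← dist_eq_norm]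
    have h2 : r₁ ^ 2 ≤ ‖x - ξ₁‖ ^ 2 := by nlinarith
    linarith
  have pcl₂ : ∀ x ∈ closure Ω, parab ξ₂ r₂ x ≤ 0 := by
    intro x hx
    have := hcl₂ hx
    rw [Metric.mem_closedBall] at this
    rw [parab_eq_norm]
    have h1 : ‖x - ξ₂‖ ≤ r₂ := by rwa [← dist_eq_norm]
    have h2 : ‖x - ξ₂‖ ^ 2 ≤ r₂ ^ 2 := by nlinarith [norm_nonneg (x - ξ₂)]
    linarith
  have plow₂ : ∀ x : Euc n, -(r₂ ^ 2) / 2 ≤ parab ξ₂ r₂ x := by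
    intro x
    rw [parab_eq_norm]
    nlinarith [norm_nonneg (x - ξ₂), sq_nonneg ‖x - ξ₂‖]
  have pval₁ : parab ξ₁ r₁ ξ₁ = -(r₁ ^ 2) / 2 := by
    rw [parab_eq_norm]
    simp
  -- PSD quadratic forms
  have hwPSD : ∀ x ∈ Ω, ∀ y : Fin n → ℝ, 0 ≤ y ⬝ᵥ hessianMatrix w x *ᵥ y := by
    intro x hx y
    rw [quadform_eq]
    exact snd_nonneg_of_convexOn hΩopen hwconv hw2 hx _
  have huPSD : ∀ x ∈ Ω, ∀ y : Fin n → ℝ, 0 ≤ y ⬝ᵥ hessianMatrix u x *ᵥ y := by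
    intro x hx y
    rw [quadform_eq]
    exact snd_nonneg_of_convexOn hΩopen huconv.convexOn hu2 hx _
  have hpPSD : ∀ (ξ : Euc n) (r : ℝ) (x : Euc n), ∀ y : Fin n → ℝ,
      0 ≤ y ⬝ᵥ hessianMatrix (parab ξ r) x *ᵥ y := by
    intro ξ r x y
    rw [parab_hessianMatrix, Matrix.one_mulVec]
    exact dotProduct_self_nonneg' y
  have hwat : ∀ x ∈ Ω, ContDiffAt ℝ 2 w x := fun x hx => (hw2 x hx).contDiffAt
    (hΩopen.mem_nhds hx)
  -- C1 : w ≤ 0 on Ω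
  have hzeroM : ∀ x : Euc n, hessianMatrix (fun _ : Euc n => (0:ℝ)) x = 0 := by
    intro x
    ext i j
    rw [hessianMatrix_apply]
    have h1 : fderiv ℝ (fun _ : Euc n => (0:ℝ)) = fun _ => 0 := by
      funext y
      exact fderiv_const_apply 0
    rw [h1]
    have h2 : fderiv ℝ (fun _ : Euc n => (0 : Euc n →L[ℝ] ℝ)) x = 0 := fderiv_const_apply 0
    rw [h2]
    simp
  have hw0 : ∀ x ∈ Ω, w x ≤ 0 := by
    apply comparison_principle hΩopen hΩbdd hw2 hwc contDiffOn_const continuousOn_const hwPSD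
    · intro x hx
      haveI : Nonempty (Fin n) := ⟨⟨0, by omega⟩⟩
      rw [hwdet x hx, hessDet, hzeroM, Matrix.det_zero]
      norm_num
    · intro x hx
      rw [hwbdry x hx]
  -- C2 : lower bound for w
  have lbw : ∀ x ∈ Ω, -(r₂ ^ 2) / 2 ≤ w x := by
    intro x hx
    have hkey : ∀ ε : ℝ, 0 < ε → ε < 1 → -(w x) ≤ r₂ ^ 2 / 2 + ε * (r₂ ^ 2 / 2) := by
      intro ε hε hε1
      have hcomp : ∀ z ∈ Ω, (1 + ε) * parab ξ₂ r₂ z ≤ w z := by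
        apply comparison_principle hΩopen hΩbdd
          (contDiffOn_const.mul (parab_contDiff ξ₂ r₂).contDiffOn)
          ((continuous_const.mul (parab_contDiff ξ₂ r₂).continuous).continuousOn)
          hw2 hwc
          (fun z hz => quadform_const_mul_nonneg (parab_contDiff ξ₂ r₂).contDiffAt
            (by linarith) (hpPSD ξ₂ r₂ z))
        · intro z hz
          rw [hwdet z hz, hessDet_const_mul (parab_contDiff ξ₂ r₂).contDiffAt (1 + ε),
            parab_hessDet, mul_one]
          exact one_lt_pow₀ (by linarith) hnne
        · intro z hz
          have h1 : parab ξ₂ r₂ z ≤ 0 := pcl₂ z ((hfr z hz).2)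
          rw [hwbdry z hz]
          exact mul_nonpos_of_nonneg_of_nonpos (by linarith) h1
      have h1 := hcomp x hx
      have h2 : (1 + ε) * (-(r₂ ^ 2) / 2) ≤ (1 + ε) * parab ξ₂ r₂ x :=
        mul_le_mul_of_nonneg_left (plow₂ x) (by linarith)
      nlinarith
    have := le_of_forall_eps (by positivity) hkey
    linarith
  -- C3 : w ξ₁ ≤ -(r₁^2)/2
  have hwξ₁ : w ξ₁ ≤ -(r₁ ^ 2) / 2 := by
    have hkey : ∀ ε : ℝ, 0 < ε → ε < 1 → w ξ₁ ≤ -(r₁ ^ 2) / 2 + ε * (r₁ ^ 2 / 2) := by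
      intro ε hε hε1
      have hcomp : ∀ z ∈ Ω, w z ≤ (1 - ε) * parab ξ₁ r₁ z := by
        apply comparison_principle hΩopen hΩbdd hw2 hwc
          (contDiffOn_const.mul (parab_contDiff ξ₁ r₁).contDiffOn)
          ((continuous_const.mul (parab_contDiff ξ₁ r₁).continuous).continuousOn)
          hwPSD
        · intro z hz
          rw [hwdet z hz, hessDet_const_mul (parab_contDiff ξ₁ r₁).contDiffAt (1 - ε),
            parab_hessDet, mul_one]
          exact pow_lt_one₀ (by linarith) (by linarith) hnne
        · intro z hz
          rw [hwbdry z hz]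
          exact mul_nonneg (by linarith) (pfr₁ z hz)
      have h1 := hcomp ξ₁ hξ₁
      rw [pval₁] at h1
      nlinarith
    have := le_of_forall_eps (by positivity) hkey
    linarith
  -- part (b)
  have hpartb : ∀ x ∈ Ω, |u x - w x| ≤ r₂ ^ 2 / 2 * δ := by
    intro x hx
    have hkey : ∀ ε : ℝ, 0 < ε → ε < 1 →
        |u x - w x| ≤ r₂ ^ 2 / 2 * δ + ε * (r₂ ^ 2 / 2 * (1 - δ)) := by
      intro ε hε hε1
      set δ' := δ + ε * (1 - δ) with hδ'def
      have hδ'1 : δ' < 1 := by nlinarith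
      have hδδ' : δ < δ' := by nlinarith
      have hδ'0 : 0 ≤ δ' := by nlinarith
      have hfb : ∀ z ∈ Ω, 1 - δ ≤ f z ∧ f z ≤ 1 + δ := by
        intro z hz
        have := abs_le.1 (hδ z hz)
        constructor <;> linarith [this.1, this.2]
      -- comp A : u ≤ (1-δ') w
      have hA : ∀ z ∈ Ω, u z ≤ (1 - δ') * w z := by
        apply comparison_principle hΩopen hΩbdd hu2 huc
          (contDiffOn_const.mul hw2)
          (continuousOn_const.mul hwc)
          huPSD
        · intro z hz
          rw [huf z hz, hessDet_const_mul (hwat z hz) (1 - δ'), hwdet z hz, mul_one]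
          exact pow_lt_pow_left₀ (by linarith [(hfb z hz).1]) (by linarith) hnne
        · intro z hz
          rw [hubdry z hz, hwbdry z hz, mul_zero]
      -- comp B : (1+δ') w ≤ u
      have hB : ∀ z ∈ Ω, (1 + δ') * w z ≤ u z := by
        apply comparison_principle hΩopen hΩbdd
          (contDiffOn_const.mul hw2)
          (continuousOn_const.mul hwc)
          hu2 huc
          (fun z hz => quadform_const_mul_nonneg (hwat z hz) (by linarith) (hwPSD z hz))
        · intro z hz
          rw [huf z hz, hessDet_const_mul (hwat z hz) (1 + δ'), hwdet z hz, mul_one]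
          have h0f : 0 ≤ f z := by linarith [(hfb z hz).1]
          exact pow_lt_pow_left₀ (by linarith [(hfb z hz).2]) h0f hnne
        · intro z hz
          rw [hubdry z hz, hwbdry z hz, mul_zero]
      have h1 := hA x hx
      have h2 := hB x hx
      have h3 := lbw x hx
      have h4 := hw0 x hx
      rw [abs_le]
      constructor
      · nlinarith [mul_le_mul_of_nonneg_left h3 hδ'0]
      · nlinarith [mul_le_mul_of_nonneg_left h3 hδ'0]
    have := le_of_forall_eps (by nlinarith) hkey
    linarith
  -- bounded images
  have hcompact : IsCompact (closure Ω) :=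
    Metric.isCompact_of_isClosed_isBounded isClosed_closure hΩbdd.closure
  obtain ⟨Cu, hCu⟩ := hcompact.exists_bound_of_continuousOn huc
  obtain ⟨Cw, hCw⟩ := hcompact.exists_bound_of_continuousOn hwc
  have hwbdd : BddBelow (w '' Ω) := by
    refine ⟨-(r₂ ^ 2) / 2, ?_⟩
    rintro _ ⟨x, hx, rfl⟩
    exact lbw x hx
  have hubdd : BddBelow (u '' Ω) := by
    refine ⟨-Cu, ?_⟩
    rintro _ ⟨x, hx, rfl⟩
    have := hCu x (subset_closure hx)
    rw [Real.norm_eq_abs] at this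
    linarith [abs_le.1 this |>.1]
  have hSbdd : BddAbove ((fun x => |u x - w x|) '' Ω) := by
    refine ⟨Cu + Cw, ?_⟩
    rintro _ ⟨x, hx, rfl⟩
    have h1 := hCu x (subset_closure hx)
    have h2 := hCw x (subset_closure hx)
    rw [Real.norm_eq_abs] at h1 h2
    calc |u x - w x| ≤ |u x| + |w x| := abs_sub _ _
      _ ≤ Cu + Cw := add_le_add h1 h2
  set S := sSup ((fun x => |u x - w x|) '' Ω) with hSdef
  have hS : ∀ x ∈ Ω, |u x - w x| ≤ S := fun x hx => le_csSup hSbdd ⟨x, hx, rfl⟩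
  refine ⟨⟨?_, ?_⟩, hpartb, ?_⟩
  · apply le_csInf (hne.image w)
    rintro _ ⟨x, hx, rfl⟩
    exact lbw x hx
  · exact le_trans (csInf_le hwbdd ⟨ξ₁, hξ₁, rfl⟩) hwξ₁
  · have h1 : sInf (u '' Ω) - S ≤ sInf (w '' Ω) := by
      apply le_csInf (hne.image w)
      rintro _ ⟨x, hx, rfl⟩
      have h2 : sInf (u '' Ω) ≤ u x := csInf_le hubdd ⟨x, hx, rfl⟩
      have h3 := hS x hx
      have := abs_le.1 h3
      linarith [this.1, this.2]
    have h2 : sInf (w '' Ω) - S ≤ sInf (u '' Ω) := by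
      apply le_csInf (hne.image u)
      rintro _ ⟨x, hx, rfl⟩
      have h2 : sInf (w '' Ω) ≤ w x := csInf_le hwbdd ⟨x, hx, rfl⟩
      have h3 := hS x hx
      have := abs_le.1 h3
      linarith [this.1, this.2]
    rw [abs_le]
    constructor <;> linarith
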